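/- For the path P_n and the cycle C_n (n ≥ 3), th_pd×(P_n) = ⌈n/3⌉ = γ(P_n) and th_pd×(C_n) = ⌈n/3⌉ = γ(C_n). -/
import Mathlib

open SimpleGraph Set

variable {V : Type*} {W : Type*}

/-- The closed neighborhood of a set `S`. -/
def closedNbhdSet (G : SimpleGraph V) (S : Set V) : Set V :=
  S ∪ {w | ∃ u ∈ S, G.Adj u w}

/-- One round of the zero forcing propagation step. -/
def pdStep (G : SimpleGraph V) (A : Set V) : Set V :=
  A ∪ {w | ∃ u ∈ A, G.neighborSet u \ A = {w}}

/-- `obs G S k` is the set `P^[k](S)` of vertices observed after round `k`. -/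
def obs (G : SimpleGraph V) (S : Set V) : ℕ → Set V
  | 0 => S
  | 1 => closedNbhdSet G S
  | (n + 2) => pdStep G (obs G S (n + 1))

/-- `S` is a power dominating set. -/
def IsPDS (G : SimpleGraph V) (S : Set V) : Prop :=
  ∃ t, obs G S t = Set.univ

/-- The power propagation time `pt_pd(G;S)`: least positive `t` with `P^[t](S) = V(G)`. -/
noncomputable def ptpd (G : SimpleGraph V) (S : Set V) : ℕ :=
  sInf {t | 1 ≤ t ∧ obs G S t = Set.univ}

/-- `S` is a dominating set. -/
def IsDomSet (G : SimpleGraph V) (S : Set V) : Prop :=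
  closedNbhdSet G S = Set.univ

/-- The domination number `γ(G)`. -/
noncomputable def gamma (G : SimpleGraph V) : ℕ :=
  sInf {k | ∃ S : Set V, IsDomSet G S ∧ S.ncard = k}

/-- The power domination number `γ_P(G)`. -/
noncomputable def gammaP (G : SimpleGraph V) : ℕ :=
  sInf {k | ∃ S : Set V, IsPDS G S ∧ S.ncard = k}

/-- The product power throttling number `th_pd^×(G)`. -/
noncomputable def thpd (G : SimpleGraph V) : ℕ :=
  sInf {m | ∃ S : Set V, IsPDS G S ∧ m = S.ncard * ptpd G S}

/-- The power propagation time of `G`: minimum over minimum power dominating sets. -/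
noncomputable def ptG (G : SimpleGraph V) : ℕ :=
  sInf {t | ∃ S : Set V, IsPDS G S ∧ S.ncard = gammaP G ∧ t = ptpd G S}

/-- `newObs G S k` is `P^(k)(S)`, the set of vertices first observed in round `k`. -/
def newObs (G : SimpleGraph V) (S : Set V) : ℕ → Set V
  | 0 => S
  | (k + 1) => obs G S (k + 1) \ obs G S k

/-- `rd G S v` is the round in which `v` is first observed. -/
noncomputable def rd (G : SimpleGraph V) (S : Set V) (v : V) : ℕ :=
  sInf {k | v ∈ obs G S k}

/-! ### Auxiliary lemmas -/

lemma obs_two' (G : SimpleGraph V) (S : Set V) (k : ℕ) :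
    obs G S (k+2) = pdStep G (obs G S (k+1)) := rfl

lemma obs_succ_subset (G : SimpleGraph V) (S : Set V) (t : ℕ) :
    obs G S t ⊆ obs G S (t+1) := by
  match t with
  | 0 => exact Set.subset_union_left
  | (k+1) => rw [obs_two']; exact Set.subset_union_left

lemma obs_mono (G : SimpleGraph V) (S : Set V) {a b : ℕ} (h : a ≤ b) :
    obs G S a ⊆ obs G S b := by
  induction b with
  | zero => simp [Nat.le_zero.mp h]
  | succ b ih =>
    rcases Nat.lt_or_ge a (b+1) with h' | h'
    · exact (ih (by omega)).trans (obs_succ_subset G S b)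
    · have : a = b + 1 := by omega
      subst this; rfl

lemma obs_ind (G : SimpleGraph V) (S : Set V) (P : V → ℕ → Prop)
    (h0 : ∀ s ∈ S, P s 0)
    (hm : ∀ v k, P v k → P v (k+1))
    (ha : ∀ u w k, P u k → G.Adj u w → P w (k+1)) :
    ∀ t, ∀ v ∈ obs G S t, P v t := by
  have key : ∀ k, ∀ v ∈ obs G S (k+1), P v (k+1) := by
    intro k
    induction k with
    | zero =>
      intro v hv
      rcases hv with h | ⟨u, hu, hadj⟩
      · exact hm v 0 (h0 v h)
      · exact ha u v 0 (h0 u hu) hadj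
    | succ k ih =>
      intro v hv
      rw [obs_two'] at hv
      rcases hv with h | ⟨u, hu, heq⟩
      · exact hm v (k+1) (ih v h)
      · have hv' : v ∈ G.neighborSet u \ obs G S (k+1) := by rw [heq]; rfl
        exact ha u v (k+1) (ih u hu) hv'.1
  intro t
  cases t with
  | zero => exact fun v hv => h0 v hv
  | succ k => exact key k

lemma card_bound {n : ℕ} (hn : 1 ≤ n) {G : SimpleGraph (Fin n)}
    (hG : ∀ u w : Fin n, G.Adj u w →
      ((n:ℤ) ∣ ((w.val:ℤ) - u.val - 1) ∨ (n:ℤ) ∣ ((w.val:ℤ) - u.val + 1)))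
    (S : Set (Fin n)) (t : ℕ) (h : obs G S t = Set.univ) :
    n ≤ S.ncard * (2*t+1) := by
  classical
  have hP : ∀ t, ∀ v ∈ obs G S t,
      (∃ s ∈ S, ∃ d : ℤ, d.natAbs ≤ t ∧ (n:ℤ) ∣ ((v.val:ℤ) - s.val - d)) := by
    apply obs_ind
    · intro s hs
      exact ⟨s, hs, 0, by simp, by simp⟩
    · rintro v k ⟨s, hs, d, hd, hdvd⟩
      exact ⟨s, hs, d, by omega, hdvd⟩
    · rintro u w k ⟨s, hs, d, hd, hdvd⟩ hadj
      rcases hG u w hadj with h1 | h1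
      · refine ⟨s, hs, d + 1, by omega, ?_⟩
        have he : (w.val:ℤ) - s.val - (d+1) = ((w.val:ℤ) - u.val - 1) + ((u.val:ℤ) - s.val - d) := by ring
        rw [he]; exact dvd_add h1 hdvd
      · refine ⟨s, hs, d - 1, by omega, ?_⟩
        have he : (w.val:ℤ) - s.val - (d-1) = ((w.val:ℤ) - u.val + 1) + ((u.val:ℤ) - s.val - d) := by ring
        rw [he]; exact dvd_add h1 hdvd
  have hall : ∀ v : Fin n, ∃ s ∈ S, ∃ d : ℤ, d.natAbs ≤ t ∧ (n:ℤ) ∣ ((v.val:ℤ) - s.val - d) :=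
    fun v => hP t v (by rw [h]; trivial)
  set Sf := S.toFinset with hSf
  set Ball : Fin n → Finset (Fin n) := fun s =>
    Finset.univ.filter (fun v => ∃ d : ℤ, d.natAbs ≤ t ∧ (n:ℤ) ∣ ((v.val:ℤ) - s.val - d)) with hBall
  have hsub : (Finset.univ : Finset (Fin n)) ⊆ Sf.biUnion Ball := by
    intro v _
    obtain ⟨s, hs, d, hd, hdvd⟩ := hall v
    exact Finset.mem_biUnion.mpr ⟨s, Set.mem_toFinset.mpr hs,
      Finset.mem_filter.mpr ⟨Finset.mem_univ _, d, hd, hdvd⟩⟩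
  have hnz : (n:ℤ) ≠ 0 := by exact_mod_cast (by omega : n ≠ 0)
  have hnpos : (0:ℤ) < n := by exact_mod_cast hn
  have hball : ∀ s : Fin n, (Ball s).card ≤ 2*t+1 := by
    intro s
    have hsurj : Set.SurjOn
        (fun d : ℤ => (⟨(((s.val:ℤ) + d) % n).toNat, by
          have h1 := Int.emod_nonneg ((s.val:ℤ)+d) hnz
          have h2 := Int.emod_lt_of_pos ((s.val:ℤ)+d) hnpos
          omega⟩ : Fin n))
        ↑(Finset.Icc (-(t:ℤ)) t) ↑(Ball s) := by
      intro v hv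
      simp only [hBall, Finset.coe_filter, Set.mem_setOf_eq] at hv
      obtain ⟨-, d, hd, hdvd⟩ := hv
      refine ⟨d, by simp only [Finset.coe_Icc, Set.mem_Icc]; omega, ?_⟩
      apply Fin.ext
      simp only
      have h2 : ((s.val:ℤ) + d) % n = (v.val:ℤ) % n := by
        apply Int.ModEq.symm
        apply Int.modEq_iff_dvd.mpr
        rw [show (s.val:ℤ) + d - (v.val:ℤ) = -((v.val:ℤ) - s.val - d) by ring]
        exact dvd_neg.mpr hdvd
      have h3 : (v.val:ℤ) % n = v.val := Int.emod_eq_of_lt (by positivity) (by exact_mod_cast v.isLt)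
      omega
    calc (Ball s).card ≤ (Finset.Icc (-(t:ℤ)) t).card :=
          Finset.card_le_card_of_surjOn _ hsurj
      _ = 2*t+1 := by rw [Int.card_Icc]; omega
  calc n = (Finset.univ : Finset (Fin n)).card := by simp
    _ ≤ (Sf.biUnion Ball).card := Finset.card_le_card hsub
    _ ≤ ∑ s ∈ Sf, (Ball s).card := Finset.card_biUnion_le
    _ ≤ Sf.card • (2*t+1) := Finset.sum_le_card_nsmul _ _ _ (fun s _ => hball s)
    _ = S.ncard * (2*t+1) := by rw [smul_eq_mul, hSf, Set.ncard_eq_toFinset_card']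

lemma fin_sub_one_dvd {n : ℕ} (hn : 1 ≤ n) {u w : Fin n} (h : (w - u).val = 1) :
    (n:ℤ) ∣ ((w.val:ℤ) - u.val - 1) := by
  have hs : (w - u).val = (n - u.val + w.val) % n := by rw [Fin.sub_def]
  rw [hs] at h
  have hu : u.val < n := u.isLt
  have hw : w.val < n := w.isLt
  rcases Nat.lt_or_ge (n - u.val + w.val) n with h' | h'
  · rw [Nat.mod_eq_of_lt h'] at h
    have h1 : w.val = 0 ∧ u.val = n - 1 := by omega
    refine ⟨-1, ?_⟩
    have hww : (w.val:ℤ) = 0 := by exact_mod_cast h1.1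
    have h2 : (u.val:ℤ) = (n:ℤ) - 1 := by
      have := h1.2; omega
    rw [hww, h2]; ring
  · have h2 : n - u.val + w.val - n < n := by omega
    rw [Nat.mod_eq_sub_mod h', Nat.mod_eq_of_lt h2] at h
    have h1 : w.val = u.val + 1 := by omega
    refine ⟨0, ?_⟩
    have hww : (w.val:ℤ) = (u.val:ℤ) + 1 := by exact_mod_cast h1
    rw [hww]; ring

lemma hG_path {n : ℕ} : ∀ u w : Fin n, (pathGraph n).Adj u w →
    ((n:ℤ) ∣ ((w.val:ℤ) - u.val - 1) ∨ (n:ℤ) ∣ ((w.val:ℤ) - u.val + 1)) := by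
  intro u w hadj
  rw [pathGraph_adj] at hadj
  rcases hadj with h | h
  · left
    have hww : (w.val:ℤ) = (u.val:ℤ) + 1 := by exact_mod_cast h.symm
    exact ⟨0, by rw [hww]; ring⟩
  · right
    have hww : (u.val:ℤ) = (w.val:ℤ) + 1 := by exact_mod_cast h.symm
    exact ⟨0, by rw [hww]; ring⟩

lemma hG_cycle {n : ℕ} (hn : 1 ≤ n) : ∀ u w : Fin n, (cycleGraph n).Adj u w →
    ((n:ℤ) ∣ ((w.val:ℤ) - u.val - 1) ∨ (n:ℤ) ∣ ((w.val:ℤ) - u.val + 1)) := by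
  intro u w hadj
  rw [cycleGraph_adj'] at hadj
  rcases hadj with h | h
  · right
    have := fin_sub_one_dvd hn h
    rw [show (w.val:ℤ) - u.val + 1 = -((u.val:ℤ) - w.val - 1) by ring]
    exact dvd_neg.mpr this
  · left
    exact fin_sub_one_dvd hn h

lemma cyc_adj_of_val {n : ℕ} (hn : 2 ≤ n) {u v : Fin n}
    (h : u.val + 1 = v.val ∨ v.val + 1 = u.val) : (cycleGraph n).Adj u v := by
  rw [cycleGraph_adj']
  have key : ∀ a b : Fin n, a.val + 1 = b.val → (b - a).val = 1 := by
    intro a b hab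
    have hs : (b - a).val = (n - a.val + b.val) % n := by rw [Fin.sub_def]
    have ha : a.val < n := a.isLt
    have hb : b.val < n := b.isLt
    rw [hs]
    have he : n - a.val + b.val = n + 1 := by omega
    rw [he, Nat.add_mod_left]
    exact Nat.mod_eq_of_lt (by omega)
  rcases h with h | h
  · exact Or.inr (key u v h)
  · exact Or.inl (key v u h)

lemma dom_exists {n : ℕ} (hn : 1 ≤ n) :
    ∃ S : Set (Fin n), S.ncard = (n+2)/3 ∧ closedNbhdSet (pathGraph n) S = Set.univ ∧
      (2 ≤ n → closedNbhdSet (cycleGraph n) S = Set.univ) := by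
  set c := (n+2)/3 with hc
  set f : ℕ → Fin n := fun k => ⟨min (3*k+1) (n-1), by omega⟩ with hf
  refine ⟨f '' ↑(Finset.range c), ?_, ?_, ?_⟩
  · rw [Set.ncard_image_of_injOn, Set.ncard_coe_finset, Finset.card_range]
    intro k1 hk1 k2 hk2 he
    simp only [Finset.coe_range, Set.mem_Iio] at hk1 hk2
    have hv : min (3*k1+1) (n-1) = min (3*k2+1) (n-1) := congrArg Fin.val he
    omega
  · rw [Set.eq_univ_iff_forall]
    intro v
    set m := v.val with hm
    have hmn : m < n := v.isLt
    set k := m / 3 with hk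
    have hkc : k < c := by omega
    have hmem : f k ∈ f '' ↑(Finset.range c) :=
      Set.mem_image_of_mem f (by simp [Finset.coe_range]; omega)
    have hq : min (3*k+1) (n-1) = m ∨ min (3*k+1) (n-1) + 1 = m ∨ m + 1 = min (3*k+1) (n-1) := by
      omega
    rcases hq with h | h | h
    · left
      have he : f k = v := Fin.ext h
      rwa [he] at hmem
    · right
      exact ⟨f k, hmem, pathGraph_adj.mpr (Or.inl (by simp only [hf]; omega))⟩
    · right
      exact ⟨f k, hmem, pathGraph_adj.mpr (Or.inr (by simp only [hf]; omega))⟩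
  · intro hn2
    rw [Set.eq_univ_iff_forall]
    intro v
    set m := v.val with hm
    have hmn : m < n := v.isLt
    set k := m / 3 with hk
    have hkc : k < c := by omega
    have hmem : f k ∈ f '' ↑(Finset.range c) :=
      Set.mem_image_of_mem f (by simp [Finset.coe_range]; omega)
    have hq : min (3*k+1) (n-1) = m ∨ min (3*k+1) (n-1) + 1 = m ∨ m + 1 = min (3*k+1) (n-1) := by
      omega
    rcases hq with h | h | h
    · left
      have he : f k = v := Fin.ext h
      rwa [he] at hmem
    · right
      exact ⟨f k, hmem, cyc_adj_of_val hn2 (Or.inl (by simp only [hf]; omega))⟩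
    · right
      exact ⟨f k, hmem, cyc_adj_of_val hn2 (Or.inr (by simp only [hf]; omega))⟩

lemma ceil_thirds (n : ℕ) : (((n+2)/3 : ℕ) : ℤ) = ⌈(n:ℚ)/3⌉ := by
  set c := (n+2)/3 with hc
  have hq1 : (n:ℚ) ≤ (c:ℚ)*3 := by exact_mod_cast (by omega : n ≤ c*3)
  have hq2 : (c:ℚ)*3 ≤ (n:ℚ)+2 := by exact_mod_cast (by omega : c*3 ≤ n+2)
  symm
  rw [Int.ceil_eq_iff]
  constructor
  · rw [lt_div_iff₀ (by norm_num : (0:ℚ) < 3)]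
    push_cast
    linarith
  · rw [div_le_iff₀ (by norm_num : (0:ℚ) < 3)]
    push_cast
    linarith

lemma main_eq {n : ℕ} (hn : 1 ≤ n) {G : SimpleGraph (Fin n)}
    (hG : ∀ u w : Fin n, G.Adj u w →
      ((n:ℤ) ∣ ((w.val:ℤ) - u.val - 1) ∨ (n:ℤ) ∣ ((w.val:ℤ) - u.val + 1)))
    (S : Set (Fin n)) (hcard : S.ncard = (n+2)/3)
    (hdom : closedNbhdSet G S = Set.univ) :
    thpd G = (n+2)/3 ∧ gamma G = (n+2)/3 := by
  have hobs1 : obs G S 1 = Set.univ := hdom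
  have hPDS : IsPDS G S := ⟨1, hobs1⟩
  have hpt : ptpd G S = 1 := by
    have h1 : 1 ∈ {t | 1 ≤ t ∧ obs G S t = Set.univ} := ⟨le_refl 1, hobs1⟩
    exact le_antisymm (Nat.sInf_le h1) (Nat.sInf_mem (⟨1, h1⟩ : Set.Nonempty _)).1
  constructor
  · apply le_antisymm
    · exact Nat.sInf_le ⟨S, hPDS, by rw [hcard, hpt, mul_one]⟩
    · have hne : {m | ∃ T : Set (Fin n), IsPDS G T ∧ m = T.ncard * ptpd G T}.Nonempty :=
        ⟨S.ncard * ptpd G S, S, hPDS, rfl⟩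
      apply le_csInf hne
      rintro m ⟨S', hS', rfl⟩
      obtain ⟨t0, ht0⟩ := hS'
      have hmem : max t0 1 ∈ {t | 1 ≤ t ∧ obs G S' t = Set.univ} :=
        ⟨le_max_right _ _, Set.eq_univ_of_univ_subset
          (ht0 ▸ obs_mono G S' (le_max_left t0 1))⟩
      obtain ⟨hp1, hp2⟩ := Nat.sInf_mem (⟨_, hmem⟩ : Set.Nonempty {t | 1 ≤ t ∧ obs G S' t = Set.univ})
      set p := ptpd G S' with hpdef
      have hp1' : 1 ≤ p := hp1
      have hb := card_bound hn hG S' p hp2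
      have h3 : n ≤ 3 * (S'.ncard * p) := by
        calc n ≤ S'.ncard * (2*p+1) := hb
          _ ≤ S'.ncard * (3*p) := Nat.mul_le_mul_left _ (by omega)
          _ = 3 * (S'.ncard * p) := by ring
      obtain ⟨m, hm⟩ : ∃ m, m = S'.ncard * p := ⟨_, rfl⟩
      rw [← hm] at h3 ⊢
      omega
  · apply le_antisymm
    · exact Nat.sInf_le ⟨S, hdom, hcard⟩
    · have hne : {k | ∃ T : Set (Fin n), IsDomSet G T ∧ T.ncard = k}.Nonempty :=
        ⟨S.ncard, S, hdom, rfl⟩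
      apply le_csInf hne
      rintro k ⟨S', hd', rfl⟩
      have hobs : obs G S' 1 = Set.univ := hd'
      have hb := card_bound hn hG S' 1 hobs
      norm_num at hb
      omega

theorem stmt6 :
    (∀ n : ℕ, 1 ≤ n →
      (thpd (pathGraph n) : ℤ) = ⌈(n : ℚ) / 3⌉ ∧ (gamma (pathGraph n) : ℤ) = ⌈(n : ℚ) / 3⌉) ∧
    (∀ n : ℕ, 3 ≤ n →
      (thpd (cycleGraph n) : ℤ) = ⌈(n : ℚ) / 3⌉ ∧ (gamma (cycleGraph n) : ℤ) = ⌈(n : ℚ) / 3⌉) := by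
  constructor
  · intro n hn
    obtain ⟨S, hcard, hdomP, _⟩ := dom_exists hn
    obtain ⟨h1, h2⟩ := main_eq hn hG_path S hcard hdomP
    rw [h1, h2, ceil_thirds]
    exact ⟨rfl, rfl⟩
  · intro n hn
    have hn1 : 1 ≤ n := by omega
    obtain ⟨S, hcard, _, hdomC⟩ := dom_exists hn1
    obtain ⟨h1, h2⟩ := main_eq hn1 (hG_cycle hn1) S hcard (hdomC (by omega))
    rw [h1, h2, ceil_thirds]
    exact ⟨rfl, rfl⟩
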